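/- arXiv:1707.04856 — 8 statements merged into one kernel-verified Lean document; each statement's English description precedes it below -/
import Mathlib

section
/- Let n, m ≥ 1 be integers. If F is a set of n-tuples with entries in {0, 1, ..., m-1} such that F does not contain two distinct tuples (d_1,...,d_n) and (k_1,...,k_n) with d_i < k_i for all i ∈ {1,...,n}, then |F| ≤ n · m^(n-1). -/
theorem stmt_0 (n m : ℕ) (hn : 1 ≤ n) (hm : 1 ≤ m)
    (F : Finset (Fin n → Fin m))
    (hF : ∀ d ∈ F, ∀ k ∈ F, d ≠ k → ¬ (∀ i : Fin n, d i < k i)) :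
    F.card ≤ n * m ^ (n - 1) := by
  obtain ⟨n, rfl⟩ := Nat.exists_eq_succ_of_ne_zero (Nat.one_le_iff_ne_zero.mp hn)
  obtain ⟨m, rfl⟩ := Nat.exists_eq_succ_of_ne_zero (Nat.one_le_iff_ne_zero.mp hm)
  simp only [Nat.succ_sub_one]
  -- minimum coordinate value
  set μ : (Fin (n+1) → Fin (m+1)) → ℕ :=
    fun d => Finset.univ.inf' Finset.univ_nonempty (fun i => (d i : ℕ)) with hμdef
  have hμle : ∀ d i, μ d ≤ (d i : ℕ) := fun d i => Finset.inf'_le _ (Finset.mem_univ i)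
  have hμmem : ∀ d : Fin (n+1) → Fin (m+1), ∃ i, (d i : ℕ) = μ d := by
    intro d
    obtain ⟨i, _, hi⟩ := Finset.exists_mem_eq_inf' (Finset.univ_nonempty)
      (fun i => ((d i : ℕ)))
    exact ⟨i, hi.symm⟩
  -- shift: subtract the minimum
  set g : (Fin (n+1) → Fin (m+1)) → (Fin (n+1) → Fin (m+1)) :=
    fun d i => ⟨(d i : ℕ) - μ d, lt_of_le_of_lt (Nat.sub_le _ _) (d i).isLt⟩ with hgdef
  have hginj : ∀ d ∈ F, ∀ k ∈ F, g d = g k → d = k := by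
    intro d hd k hk h
    by_contra hne
    have hval : ∀ i, (d i : ℕ) - μ d = (k i : ℕ) - μ k := by
      intro i
      have := congrFun h i
      exact congrArg Fin.val this
    rcases lt_trichotomy (μ d) (μ k) with hlt | heq | hgt
    · exact hF d hd k hk hne (fun i => by
        have h1 := hval i; have h2 := hμle d i; have h3 := hμle k i
        rw [Fin.lt_def]; omega)
    · exact hne (funext fun i => Fin.ext (by
        have h1 := hval i; have h2 := hμle d i; have h3 := hμle k i; omega))
    · exact hF k hk d hd (Ne.symm hne) (fun i => by
        have h1 := hval i; have h2 := hμle d i; have h3 := hμle k i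
        rw [Fin.lt_def]; omega)
  -- index achieving the minimum
  set ι : (Fin (n+1) → Fin (m+1)) → Fin (n+1) := fun d => (hμmem d).choose with hιdef
  have hι : ∀ d, (d (ι d) : ℕ) = μ d := fun d => (hμmem d).choose_spec
  set φ : (Fin (n+1) → Fin (m+1)) → Fin (n+1) × (Fin n → Fin (m+1)) :=
    fun d => (ι d, fun j => g d ((ι d).succAbove j)) with hφdef
  have hφinj : ∀ d ∈ F, ∀ k ∈ F, φ d = φ k → d = k := by
    intro d hd k hk h
    have h1 : ι d = ι k := congrArg Prod.fst h
    have h2 : ∀ j, g d ((ι d).succAbove j) = g k ((ι d).succAbove j) := by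
      intro j
      have := congrFun (congrArg Prod.snd h) j
      simp only [hφdef] at this
      rw [← h1] at this
      exact this
    apply hginj d hd k hk
    funext i
    rcases eq_or_ne i (ι d) with heq | hne
    · apply Fin.ext
      show (d i : ℕ) - μ d = (k i : ℕ) - μ k
      rw [heq, hι d, h1, hι k]
      omega
    · obtain ⟨j, rfl⟩ := Fin.exists_succAbove_eq hne
      exact h2 j
  calc F.card ≤ (Finset.univ : Finset (Fin (n+1) × (Fin n → Fin (m+1)))).card := by
        apply Finset.card_le_card_of_injOn φ (fun x _ => Finset.mem_univ _)
        intro d hd k hk h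
        exact hφinj d (by simpa using hd) k (by simpa using hk) h
    _ = (n+1) * (m+1) ^ n := by
        simp [Fintype.card_prod, Fintype.card_fun]
end

section
/- Let n ≥ 2 and let S ⊆ [0,1]^n be a set not containing two elements x, y with x_i ≤ y_i for all i ∈ {1,...,n}. Then the Hausdorff dimension of S is at most n - 1. -/
/-!
Write `x ↦ (x j - x i₀)_{j ≠ i₀}` for the projection along the diagonal `(1, …, 1)` onto a
coordinate hyperplane. If `x ≠ y` are incomparable, `x - y` has a nonnegative and a nonpositive
coordinate, which forces every coordinate of `x - y` to be at most twice the sup-distance of the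
projections. So on an antichain the projection is antilipschitz, and the antichain has Hausdorff
dimension at most that of `ℝ^(n-1)`.
-/

open MeasureTheory
open scoped ENNReal

lemma abs_le_two_mul_of_abs_sub_le {a b t c m : ℝ} (ha : |a - c| ≤ m) (hb : |b - c| ≤ m)
    (ht : |t - c| ≤ m) (ha₀ : 0 ≤ a) (hb₀ : b ≤ 0) : |t| ≤ 2 * m := by
  rw [abs_le] at *
  constructor <;> linarith

lemma dimH_le_dimH_image_of_antilipschitzWith_domRestrict {X Y : Type*} [EMetricSpace X]
    [EMetricSpace Y] {K : NNReal} {s : Set X} {f : X → Y}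
    (hf : AntilipschitzWith K (s.domRestrict f)) : dimH s ≤ dimH (f '' s) :=
  calc dimH s = dimH (Set.univ : Set s) := by
        rw [← (isometry_subtype_coe (s := s)).dimH_image, Set.image_univ, Subtype.range_coe]
    _ ≤ dimH (s.domRestrict f '' Set.univ) := hf.le_dimH_image _
    _ = dimH (f '' s) := by rw [Set.image_univ, Set.range_domRestrict]

section

variable {ι : Type*} [Fintype ι] [DecidableEq ι]

def projAlongDiagonal (i₀ : ι) (x : ι → ℝ) : {j // j ≠ i₀} → ℝ :=
  fun j => x j - x i₀

lemma dist_le_two_mul_dist_projAlongDiagonal (i₀ : ι) {x y : ι → ℝ} (hxy : ¬ x ≤ y)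
    (hyx : ¬ y ≤ x) :
    dist x y ≤ 2 * dist (projAlongDiagonal i₀ x) (projAlongDiagonal i₀ y) := by
  set m := dist (projAlongDiagonal i₀ x) (projAlongDiagonal i₀ y)
  have hm : ∀ k, |(x k - y k) - (x i₀ - y i₀)| ≤ m := by
    intro k
    by_cases hk : k = i₀
    · simp [hk, m]
    · calc |(x k - y k) - (x i₀ - y i₀)|
          = dist (projAlongDiagonal i₀ x ⟨k, hk⟩) (projAlongDiagonal i₀ y ⟨k, hk⟩) := by
            rw [Real.dist_eq, projAlongDiagonal, projAlongDiagonal]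
            ring_nf
        _ ≤ m := dist_le_pi_dist (projAlongDiagonal i₀ x) (projAlongDiagonal i₀ y) _
  obtain ⟨i, hi⟩ := not_forall.1 (mt Pi.le_def.2 hxy)
  obtain ⟨j, hj⟩ := not_forall.1 (mt Pi.le_def.2 hyx)
  refine (dist_pi_le_iff (by positivity)).2 fun k => ?_
  rw [Real.dist_eq]
  exact abs_le_two_mul_of_abs_sub_le (hm i) (hm j) (hm k) (by linarith) (by linarith)

lemma antilipschitzWith_domRestrict_projAlongDiagonal (i₀ : ι) {S : Set (ι → ℝ)}
    (hS : IsAntichain (· ≤ ·) S) :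
    AntilipschitzWith 2 (S.domRestrict (projAlongDiagonal i₀)) := by
  refine AntilipschitzWith.of_le_mul_dist fun x y => ?_
  rcases eq_or_ne x y with rfl | hne
  · simp
  have hne' : (x : ι → ℝ) ≠ y := Subtype.coe_ne_coe.2 hne
  exact dist_le_two_mul_dist_projAlongDiagonal i₀ (hS x.2 y.2 hne') (hS y.2 x.2 hne'.symm)

end

theorem IsAntichain.dimH_le_card_sub_one {ι : Type*} [Fintype ι] {S : Set (ι → ℝ)}
    (hS : IsAntichain (· ≤ ·) S) : dimH S ≤ Fintype.card ι - 1 := by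
  classical
  rcases isEmpty_or_nonempty ι with _ | ⟨⟨i₀⟩⟩
  · simp [dimH_subsingleton Set.subsingleton_of_subsingleton]
  calc dimH S ≤ dimH (projAlongDiagonal i₀ '' S) :=
        dimH_le_dimH_image_of_antilipschitzWith_domRestrict
          (antilipschitzWith_domRestrict_projAlongDiagonal i₀ hS)
    _ ≤ dimH (Set.univ : Set ({j // j ≠ i₀} → ℝ)) := dimH_mono (Set.subset_univ _)
    _ = Fintype.card ι - 1 := by
      rw [Real.dimH_univ_pi, Fintype.card_subtype_compl, Fintype.card_subtype_eq,
        ENNReal.natCast_sub, Nat.cast_one]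

theorem stmt_3_general (n : ℕ)
    (S : Set (EuclideanSpace ℝ (Fin n)))
    (hanti : ∀ x ∈ S, ∀ y ∈ S, (∀ i, x i ≤ y i) → x = y) :
    dimH S ≤ (n : ℝ≥0∞) - 1 := by
  set e := PiLp.continuousLinearEquiv 2 ℝ (fun _ : Fin n => ℝ)
  have hS : IsAntichain (· ≤ ·) (e '' S) := by
    rintro _ ⟨x, hx, rfl⟩ _ ⟨y, hy, rfl⟩ hne hle
    exact hne (congrArg e (hanti x hx y hy hle))
  calc dimH S = dimH (e '' S) := (e.dimH_image S).symm
    _ ≤ _ := by simpa using hS.dimH_le_card_sub_one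

theorem stmt_3 (n : ℕ) (hn : 2 ≤ n)
    (S : Set (EuclideanSpace ℝ (Fin n)))
    (hScube : ∀ x ∈ S, ∀ i, x i ∈ Set.Icc (0 : ℝ) 1)
    (hanti : ∀ x ∈ S, ∀ y ∈ S, (∀ i, x i ≤ y i) → x = y) :
    dimH S ≤ (n : ℝ≥0∞) - 1 :=
  stmt_3_general n S hanti
end

section
/- Let n ≥ 2 and let S ⊆ [0,1]^n be an n-cube antichain. If N_{1/m}(S) denotes the number of axis-aligned grid cubes of side 1/m (from the partition of [0,1]^n into m^n such cubes) intersecting S, then N_{1/m}(S) ≤ n · m^(n-1). -/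
open MeasureTheory

/-- The interval `I_{j,m}`: `[j/m, (j+1)/m)` for `j < m-1` and `[j/m, 1]` for `j = m-1`. -/
def gridInterval (m : ℕ) (j : Fin m) : Set ℝ :=
  if (j : ℕ) = m - 1 then Set.Icc ((j : ℕ) / m) 1
  else Set.Ico ((j : ℕ) / m) (((j : ℕ) + 1) / m)

/-- The grid cube indexed by `d ∈ {0,…,m-1}^n`. -/
def gridCube (n m : ℕ) (d : Fin n → Fin m) : Set (EuclideanSpace ℝ (Fin n)) :=
  {x | ∀ i, x i ∈ gridInterval m (d i)}

theorem stmt_4 (n m : ℕ) (hn : 2 ≤ n) (hm : 1 ≤ m)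
    (S : Set (EuclideanSpace ℝ (Fin n)))
    (hScube : ∀ x ∈ S, ∀ i, x i ∈ Set.Icc (0 : ℝ) 1)
    (hanti : ∀ x ∈ S, ∀ y ∈ S, (∀ i, x i ≤ y i) → x = y) :
    {d : Fin n → Fin m | (gridCube n m d ∩ S).Nonempty}.ncard ≤ n * m ^ (n - 1) := by
  classical
  have hnpos : 0 < n := by omega
  have hmpos : (0 : ℝ) < m := by exact_mod_cast hm
  set D := {d : Fin n → Fin m | (gridCube n m d ∩ S).Nonempty} with hD
  -- lower bound on points in a grid interval
  have hlow : ∀ (j : Fin m) (r : ℝ), r ∈ gridInterval m j → ((j : ℕ) : ℝ) / m ≤ r := by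
    intro j r hr
    unfold gridInterval at hr
    split_ifs at hr with h
    · exact hr.1
    · exact hr.1
  -- strict upper bound when j ≠ m-1
  have hup : ∀ (j : Fin m) (r : ℝ), (j : ℕ) ≠ m - 1 → r ∈ gridInterval m j →
      r < (((j : ℕ) : ℝ) + 1) / m := by
    intro j r hj hr
    unfold gridInterval at hr
    rw [if_neg hj] at hr
    exact_mod_cast hr.2
  -- key geometric fact: no strictly dominating pair of occupied cubes
  have key : ∀ d ∈ D, ∀ d' ∈ D, ¬ (∀ i, (d i : ℕ) < (d' i : ℕ)) := by
    intro d hd d' hd' hlt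
    obtain ⟨x, hxc, hxS⟩ := hd
    obtain ⟨y, hyc, hyS⟩ := hd'
    have hxy : ∀ i, x i < y i := by
      intro i
      have h1 : (d i : ℕ) ≠ m - 1 := by
        have := (d' i).isLt
        have := hlt i
        omega
      have h2 : x i < (((d i : ℕ) : ℝ) + 1) / m := hup _ _ h1 (hxc i)
      have h3 : ((d' i : ℕ) : ℝ) / m ≤ y i := hlow _ _ (hyc i)
      refine lt_of_lt_of_le (lt_of_lt_of_le h2 ?_) h3
      have hc : (((d i : ℕ) : ℝ)) + 1 ≤ ((d' i : ℕ) : ℝ) := by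
        exact_mod_cast Nat.succ_le_of_lt (hlt i)
      exact (div_le_div_iff_of_pos_right hmpos).mpr hc
    have heq := hanti x hxS y hyS (fun i => (hxy i).le)
    exact absurd (heq ▸ hxy ⟨0, hnpos⟩) (lt_irrefl _)
  -- the shift map
  have hne : (Finset.univ : Finset (Fin n)).Nonempty := ⟨⟨0, hnpos⟩, Finset.mem_univ _⟩
  set t : (Fin n → Fin m) → ℕ := fun d => Finset.univ.inf' hne (fun j => (d j : ℕ)) with ht
  have htle : ∀ d (i : Fin n), t d ≤ (d i : ℕ) := fun d i =>
    Finset.inf'_le _ (Finset.mem_univ i)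
  set F : (Fin n → Fin m) → (Fin n → Fin m) := fun d i =>
    ⟨(d i : ℕ) - t d, lt_of_le_of_lt (Nat.sub_le _ _) (d i).isLt⟩ with hF
  set E : Set (Fin n → Fin m) := {e | ∃ i, (e i : ℕ) = 0} with hE
  have hmaps : ∀ d ∈ D, F d ∈ E := by
    intro d _
    obtain ⟨i, _, hi⟩ := Finset.exists_mem_eq_inf' hne (fun j => ((d j : ℕ) : ℕ))
    exact ⟨i, by simp [hF, ← hi, ht]⟩
  have hinj : Set.InjOn F D := by
    intro d hd d' hd' hFeq
    have hco : ∀ i, (d i : ℕ) + t d' = (d' i : ℕ) + t d := by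
      intro i
      have h1 : (d i : ℕ) - t d = (d' i : ℕ) - t d' := by
        have := congrFun hFeq i
        simpa [hF, Fin.ext_iff] using this
      have := htle d i
      have := htle d' i
      omega
    rcases lt_trichotomy (t d) (t d') with h | h | h
    · exact absurd (fun i => by have := hco i; omega) (key d hd d' hd')
    · funext i
      exact Fin.ext (by have := hco i; omega)
    · exact absurd (fun i => by have := hco i; omega) (key d' hd' d hd)
  have h1 : D.ncard ≤ E.ncard :=
    Set.ncard_le_ncard_of_injOn F hmaps hinj (Set.toFinite E)
  -- now bound E.ncard
  have h2 : E.ncard ≤ n * m ^ (n - 1) := by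
    rw [Set.ncard_eq_toFinset_card']
    have hsub : E.toFinset ⊆ Finset.univ.biUnion
        (fun i : Fin n => Finset.univ.filter (fun e : Fin n → Fin m => (e i : ℕ) = 0)) := by
      intro e he
      rw [Set.mem_toFinset] at he
      obtain ⟨i, hi⟩ := he
      exact Finset.mem_biUnion.mpr ⟨i, Finset.mem_univ _, by simp [hi]⟩
    refine le_trans (Finset.card_le_card hsub) (le_trans (Finset.card_biUnion_le) ?_)
    have hone : ∀ i : Fin n,
        (Finset.univ.filter (fun e : Fin n → Fin m => (e i : ℕ) = 0)).card ≤ m ^ (n - 1) := by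
      intro i
      have : (Finset.univ.filter (fun e : Fin n → Fin m => (e i : ℕ) = 0)).card ≤
          Fintype.card ({j : Fin n // j ≠ i} → Fin m) := by
        rw [← Finset.card_univ]
        apply Finset.card_le_card_of_injOn
          (fun e (j : {j : Fin n // j ≠ i}) => e j.1)
          (fun _ _ => Finset.mem_univ _)
        intro e he e' he' heq
        simp only [Finset.mem_coe, Finset.mem_filter] at he he'
        funext j
        by_cases hj : j = i
        · subst hj; exact Fin.ext (he.2.trans he'.2.symm)
        · exact congrFun heq ⟨j, hj⟩
      refine le_trans this (le_of_eq ?_)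
      have hcc : Fintype.card {j : Fin n // j ≠ i} = n - 1 := by
        simp [Fintype.card_subtype_compl]
      rw [Fintype.card_fun, Fintype.card_fin, hcc]
    refine le_trans (Finset.sum_le_sum (fun i _ => hone i)) ?_
    simp [Finset.sum_const, Finset.card_univ]
  exact le_trans h1 h2
end

section
/- Any n-cube antichain S ⊆ [0,1]^n has upper box-counting dimension at most n - 1. -/
open MeasureTheory Filter
open scoped ENNReal Topology

/-- `coverNum S δ`: the smallest number of sets of diameter at most `δ` needed to cover `S`. -/
noncomputable def coverNum {X : Type*} [PseudoMetricSpace X] (S : Set X) (δ : ℝ) : ℝ≥0∞ :=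
  sInf {c : ℝ≥0∞ | ∃ t : Finset (Set X), c = t.card ∧
    (S ⊆ ⋃ U ∈ t, U) ∧ ∀ U ∈ t, Metric.diam U ≤ δ}

/-- Upper box-counting dimension: `limsup_{δ → 0⁺} log N_δ(S) / (-log δ)`. -/
noncomputable def upperBoxDim {X : Type*} [PseudoMetricSpace X] (S : Set X) : ℝ :=
  limsup (fun δ : ℝ => Real.log (coverNum S δ).toReal / (-Real.log δ)) (𝓝[>] 0)

set_option maxHeartbeats 1000000 in
open Finset in
lemma coverNum_antichain_bound (n : ℕ) (hn : 1 ≤ n)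
    (S : Set (EuclideanSpace ℝ (Fin n)))
    (hScube : ∀ x ∈ S, ∀ i, x i ∈ Set.Icc (0 : ℝ) 1)
    (hanti : ∀ x ∈ S, ∀ y ∈ S, (∀ i, x i ≤ y i) → x = y)
    {δ : ℝ} (hδ : 0 < δ) (hδ1 : δ ≤ 1) :
    coverNum S δ ≤ ((3 * ((2 * ⌊(n:ℝ)/δ⌋ + 1).toNat) ^ (n-1) : ℕ) : ℝ≥0∞) := by
  classical
  have hn0 : (0:ℝ) < n := by exact_mod_cast hn
  set s : ℝ := δ / n with hs
  have hspos : 0 < s := div_pos hδ hn0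
  set M : ℤ := ⌊(n:ℝ)/δ⌋ with hM
  have hfloor : ∀ x ∈ S, ∀ j : Fin n, (0:ℤ) ≤ ⌊x j / s⌋ ∧ ⌊x j / s⌋ ≤ M := by
    intro x hx j
    obtain ⟨h0, h1⟩ := hScube x hx j
    constructor
    · exact Int.floor_nonneg.2 (div_nonneg h0 hspos.le)
    · rw [hM]
      have : x j / s ≤ (n:ℝ)/δ := by
        have h2 : x j / s ≤ 1 / s := by gcongr
        rwa [hs, one_div_div] at h2
      exact Int.floor_le_floor this
  obtain ⟨z, -⟩ : ∃ z : Fin n, True := ⟨⟨0, hn⟩, trivial⟩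
  set Q : (Fin n → ℤ) → Set (EuclideanSpace ℝ (Fin n)) :=
    fun k => {y | ∀ j, (k j : ℝ) * s ≤ y j ∧ y j ≤ k j * s + s} with hQ
  set K : Finset (Fin n → ℤ) :=
    (Finset.Icc (0 : Fin n → ℤ) (fun _ => M)).filter
      (fun k => ∃ x ∈ S, ∀ j, ⌊x j / s⌋ = k j) with hK
  -- membership facts for K
  have hKmem : ∀ k ∈ K, (∀ j, (0:ℤ) ≤ k j ∧ k j ≤ M) ∧ ∃ x ∈ S, ∀ j, ⌊x j / s⌋ = k j := by
    intro k hk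
    rw [hK, Finset.mem_filter, Finset.mem_Icc] at hk
    exact ⟨fun j => ⟨hk.1.1 j, hk.1.2 j⟩, hk.2⟩
  -- the covering family
  set t : Finset (Set (EuclideanSpace ℝ (Fin n))) := K.image Q with ht
  -- S covered
  have hcover : S ⊆ ⋃ U ∈ t, U := by
    intro x hx
    set k : Fin n → ℤ := fun j => ⌊x j / s⌋ with hk
    have hkK : k ∈ K := by
      rw [hK, Finset.mem_filter, Finset.mem_Icc]
      refine ⟨⟨fun j => (hfloor x hx j).1, fun j => (hfloor x hx j).2⟩, x, hx, fun j => rfl⟩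
    have hxQ : x ∈ Q k := by
      intro j
      constructor
      · have := Int.floor_le (x j / s)
        calc (k j : ℝ) * s ≤ (x j / s) * s := by
              exact mul_le_mul_of_nonneg_right this hspos.le
          _ = x j := by field_simp
      · have := Int.lt_floor_add_one (x j / s)
        have h2 : x j / s * s < ((k j : ℝ) + 1) * s :=
          mul_lt_mul_of_pos_right this hspos
        rw [div_mul_cancel₀ _ hspos.ne'] at h2
        nlinarith
    exact Set.mem_biUnion (Finset.mem_image_of_mem Q hkK) hxQ
  -- diameters
  have hdiam : ∀ U ∈ t, Metric.diam U ≤ δ := by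
    intro U hU
    rw [ht, Finset.mem_image] at hU
    obtain ⟨k, _, rfl⟩ := hU
    apply Metric.diam_le_of_forall_dist_le hδ.le
    intro y hy y' hy'
    rw [EuclideanSpace.dist_eq]
    have hsum : (∑ i, dist (y i) (y' i) ^ 2) ≤ δ ^ 2 := by
      simp only [hQ, Set.mem_setOf_eq] at hy hy'
      have hterm : ∀ i : Fin n, dist (y i) (y' i) ^ 2 ≤ s ^ 2 := by
        intro i
        obtain ⟨a1, a2⟩ := hy i
        obtain ⟨b1, b2⟩ := hy' i
        rw [Real.dist_eq, sq_abs]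
        nlinarith
      calc (∑ i, dist (y i) (y' i) ^ 2) ≤ ∑ _i : Fin n, s ^ 2 :=
            Finset.sum_le_sum (fun i _ => hterm i)
        _ = n * s ^ 2 := by simp [mul_comm]
        _ ≤ δ ^ 2 := by
            have h1 : (1:ℝ) ≤ n := by exact_mod_cast hn
            have hns : (n:ℝ) * s = δ := by rw [hs]; field_simp
            nlinarith [hspos.le, mul_nonneg (mul_nonneg (sub_nonneg.2 h1) hspos.le) hspos.le]
    calc √(∑ i, dist (y i) (y' i) ^ 2) ≤ √(δ^2) := Real.sqrt_le_sqrt hsum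
      _ = δ := Real.sqrt_sq hδ.le
  -- cardinality bound
  have hMnonneg : (0:ℤ) ≤ M := Int.floor_nonneg.2 (by positivity)
  -- pairwise bound in fibers
  set diffv : (Fin n → ℤ) → (Fin n → ℤ) := fun k j => k j - k z with hdiffv
  have hpair : ∀ k ∈ K, ∀ k' ∈ K, diffv k = diffv k' → k' z ≤ k z + 1 := by
    intro k hk k' hk' hd
    by_contra hcon
    push_neg at hcon
    have hc : k z + 2 ≤ k' z := by omega
    obtain ⟨_, x, hx, hkx⟩ := hKmem k hk
    obtain ⟨_, y, hy, hky⟩ := hKmem k' hk'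
    have hkk' : ∀ j, k j + 2 ≤ k' j := by
      intro j
      have hthis : k j - k z = k' j - k' z := congrFun hd j
      omega
    have hxy : ∀ j, x j ≤ y j := by
      intro j
      have h1 : x j / s < (k j : ℝ) + 1 := by
        rw [← hkx j] at *
        exact_mod_cast Int.lt_floor_add_one (x j / s)
      have h2 : ((k' j : ℝ)) ≤ y j / s := by
        rw [← hky j]
        exact Int.floor_le (y j / s)
      have h1' : x j < ((k j : ℝ) + 1) * s := by
        have := mul_lt_mul_of_pos_right h1 hspos
        rwa [div_mul_cancel₀ _ hspos.ne'] at this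
      have h2' : ((k' j : ℝ)) * s ≤ y j := by
        have := mul_le_mul_of_nonneg_right h2 hspos.le
        rwa [div_mul_cancel₀ _ hspos.ne'] at this
      have h4 := hkk' j
      have h3 : ((k j : ℝ) + 1) ≤ (k' j : ℝ) := by
        exact_mod_cast (by omega : k j + 1 ≤ k' j)
      nlinarith
    have hxeqy : x = y := hanti x hx y hy hxy
    have : k z = k' z := by
      rw [← hkx z, ← hky z, hxeqy]
    omega
  -- fiber cardinality
  have hfiber : ∀ d ∈ K.image diffv, (K.filter (fun k => diffv k = d)).card ≤ 3 := by
    intro d _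
    set F := K.filter (fun k => diffv k = d) with hF
    have hinj : Set.InjOn (fun k => k z) (F : Set (Fin n → ℤ)) := by
      intro k hk k' hk' hzz
      simp only [Finset.coe_filter, Set.mem_setOf_eq, hF, Finset.mem_coe, Finset.mem_filter] at hk hk'
      funext j
      have h1 : k j - k z = d j := congrFun hk.2 j
      have h2 : k' j - k' z = d j := congrFun hk'.2 j
      have h3 : k z = k' z := hzz
      clear hzz hk hk'
      omega
    rcases Finset.eq_empty_or_nonempty (K.filter (fun k => diffv k = d)) with he | hne
    · rw [hF, he]; simp
    · obtain ⟨k₀, hk₀⟩ := hne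
      have hk₀K : k₀ ∈ K := (Finset.mem_filter.1 hk₀).1
      have himg : (K.filter (fun k => diffv k = d)).image (fun k => k z) ⊆
          Finset.Icc (k₀ z - 1) (k₀ z + 1) := by
        intro b hb
        rw [Finset.mem_image] at hb
        obtain ⟨k, hk, rfl⟩ := hb
        rw [Finset.mem_filter] at hk hk₀
        have h1 := hpair k hk.1 k₀ hk₀K (hk.2.trans hk₀.2.symm)
        have h2 := hpair k₀ hk₀K k hk.1 (hk₀.2.trans hk.2.symm)
        rw [Finset.mem_Icc]
        exact ⟨by omega, by omega⟩
      calc (K.filter (fun k => diffv k = d)).card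
          = ((K.filter (fun k => diffv k = d)).image (fun k => k z)).card :=
            (Finset.card_image_of_injOn hinj).symm
        _ ≤ (Finset.Icc (k₀ z - 1) (k₀ z + 1)).card := Finset.card_le_card himg
        _ ≤ 3 := by rw [Int.card_Icc]; omega
  -- image of diffv bound
  have himgcard : (K.image diffv).card ≤ ((2 * M + 1).toNat) ^ (n - 1) := by
    have hsub : K.image diffv ⊆ Finset.Icc (fun j => if j = z then 0 else -M)
        (fun j => if j = z then 0 else M) := by
      intro d hd
      rw [Finset.mem_image] at hd
      obtain ⟨k, hk, rfl⟩ := hd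
      obtain ⟨hbd, _⟩ := hKmem k hk
      rw [Finset.mem_Icc]
      constructor
      · intro j
        have hdj : diffv k j = k j - k z := rfl
        obtain ⟨a1, a2⟩ := hbd j
        obtain ⟨b1, b2⟩ := hbd z
        rcases eq_or_ne j z with hj | hj
        · rw [hdj, hj]; simp
        · rw [hdj]; simp only [ne_eq, hj, not_false_eq_true, if_neg]; omega
      · intro j
        have hdj : diffv k j = k j - k z := rfl
        obtain ⟨a1, a2⟩ := hbd j
        obtain ⟨b1, b2⟩ := hbd z
        rcases eq_or_ne j z with hj | hj
        · rw [hdj, hj]; simp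
        · rw [hdj]; simp only [ne_eq, hj, not_false_eq_true, if_neg]; omega
    calc (K.image diffv).card ≤ _ := Finset.card_le_card hsub
      _ = ∏ j : Fin n, (Finset.Icc (if j = z then 0 else -M) (if j = z then 0 else M)).card :=
          Pi.card_Icc _ _
      _ = (Finset.Icc (0:ℤ) 0).card *
          ∏ j ∈ Finset.univ.erase z,
            (Finset.Icc (if j = z then 0 else -M) (if j = z then 0 else M)).card := by
          rw [← Finset.mul_prod_erase Finset.univ _ (Finset.mem_univ z)]
          simp
      _ = ((2 * M + 1).toNat) ^ (n - 1) := by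
          rw [Int.card_Icc]
          have : ∀ j ∈ Finset.univ.erase z,
              (Finset.Icc (if j = z then 0 else -M) (if j = z then 0 else M)).card
                = (2 * M + 1).toNat := by
            intro j hj
            have : j ≠ z := (Finset.mem_erase.1 hj).1
            rw [if_neg this, if_neg this, Int.card_Icc]
            congr 1
            omega
          rw [Finset.prod_congr rfl this, Finset.prod_const, Finset.card_erase_of_mem (Finset.mem_univ z)]
          simp
  have hcard : t.card ≤ 3 * ((2 * M + 1).toNat) ^ (n - 1) := by
    calc t.card ≤ K.card := Finset.card_image_le
      _ ≤ 3 * (K.image diffv).card := Finset.card_le_mul_card_image (f := diffv) K 3 hfiber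
      _ ≤ 3 * ((2 * M + 1).toNat) ^ (n - 1) := by
          exact Nat.mul_le_mul_left 3 himgcard
  calc coverNum S δ ≤ ((t.card : ℕ) : ℝ≥0∞) := sInf_le ⟨t, rfl, hcover, hdiam⟩
    _ ≤ _ := by exact_mod_cast hcard

lemma log_coverNum_nonneg {X : Type*} [PseudoMetricSpace X] (S : Set X) (δ : ℝ) :
    0 ≤ Real.log (coverNum S δ).toReal := by
  rcases eq_or_ne (coverNum S δ) 0 with h | h
  · simp [h]
  rcases eq_or_ne (coverNum S δ) ⊤ with h' | h'
  · simp [h']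
  have h1 : 1 ≤ coverNum S δ := by
    by_contra hc
    push_neg at hc
    rw [coverNum] at hc
    obtain ⟨c, hcmem, hc1⟩ := sInf_lt_iff.1 hc
    obtain ⟨t, rfl, hcov, hdi⟩ := hcmem
    have ht0 : t.card = 0 := by
      by_contra h0
      have h2 : (1:ℝ≥0∞) ≤ (t.card : ℝ≥0∞) := by
        exact_mod_cast Nat.one_le_iff_ne_zero.2 h0
      exact absurd hc1 (not_lt.2 h2)
    have hle : coverNum S δ ≤ ((t.card : ℕ) : ℝ≥0∞) := sInf_le ⟨t, rfl, hcov, hdi⟩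
    rw [ht0] at hle
    simp only [Nat.cast_zero, nonpos_iff_eq_zero] at hle
    exact h hle
  apply Real.log_nonneg
  rw [← ENNReal.toReal_one]
  exact ENNReal.toReal_mono h' h1

theorem stmt_5 (n : ℕ) (hn : 1 ≤ n)
    (S : Set (EuclideanSpace ℝ (Fin n)))
    (hScube : ∀ x ∈ S, ∀ i, x i ∈ Set.Icc (0 : ℝ) 1)
    (hanti : ∀ x ∈ S, ∀ y ∈ S, (∀ i, x i ≤ y i) → x = y) :
    upperBoxDim S ≤ (n : ℝ) - 1 := by
  have hnR : (1:ℝ) ≤ n := by exact_mod_cast hn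
  set C : ℝ := 3 * (3 * n) ^ (n - 1) with hC
  have h3n : (1:ℝ) ≤ 3 * n := by linarith
  have hC1 : 1 ≤ C := by
    have : (1:ℝ) ≤ (3*n)^(n-1) := one_le_pow₀ h3n
    nlinarith
  set f : ℝ → ℝ := fun δ => Real.log (coverNum S δ).toReal / (-Real.log δ) with hf
  set g : ℝ → ℝ := fun δ => ((n:ℝ) - 1) + Real.log C * (-Real.log δ)⁻¹ with hg
  have hmem : Set.Ioo (0:ℝ) 1 ∈ 𝓝[>] (0:ℝ) :=
    Ioo_mem_nhdsGT_of_mem ⟨le_refl 0, one_pos⟩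
  -- pointwise bound on (0,1)
  have hev : ∀ δ ∈ Set.Ioo (0:ℝ) 1, f δ ≤ g δ := by
    intro δ hδm
    obtain ⟨hδ0, hδ1⟩ := hδm
    have hL : 0 < -Real.log δ := by
      have := Real.log_neg hδ0 hδ1
      linarith
    set M : ℤ := ⌊(n:ℝ)/δ⌋ with hM
    have hMge : (1:ℝ) ≤ (M:ℝ) := by
      have h1 : (1:ℝ) ≤ (n:ℝ)/δ := by
        rw [le_div_iff₀ hδ0]
        nlinarith
      have := Int.le_floor.2 (by exact_mod_cast h1 : ((1:ℤ):ℝ) ≤ (n:ℝ)/δ)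
      exact_mod_cast this
    have hMle : (M:ℝ) ≤ (n:ℝ)/δ := Int.floor_le _
    have hM0 : (0:ℤ) ≤ 2*M+1 := by
      have : (1:ℤ) ≤ M := by exact_mod_cast hMge
      omega
    -- real bound on toReal of coverNum
    have hNb : (coverNum S δ).toReal ≤ C * (δ⁻¹) ^ (n-1) := by
      have hb := coverNum_antichain_bound n hn S hScube hanti hδ0 hδ1.le
      have hb2 : (coverNum S δ).toReal ≤ ((3 * ((2*M+1).toNat) ^ (n-1) : ℕ) : ℝ) := by
        have := ENNReal.toReal_mono (ENNReal.natCast_ne_top _) hb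
        simpa using this
      refine hb2.trans ?_
      push_cast
      have hcast : (((2*M+1).toNat : ℝ)) = ((2*M+1 : ℤ) : ℝ) := by
        exact_mod_cast Int.toNat_of_nonneg hM0
      rw [hcast]
      have hle3 : ((2*M+1 : ℤ) : ℝ) ≤ 3 * n * δ⁻¹ := by
        push_cast
        have h1 : (1:ℝ) ≤ (n:ℝ)/δ := le_trans hMge hMle
        rw [mul_comm (3*(n:ℝ)) δ⁻¹, ← div_eq_inv_mul]  -- 3n/δ? careful
        calc 2*(M:ℝ)+1 ≤ 2*((n:ℝ)/δ) + (n:ℝ)/δ := by linarith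
          _ = 3*(n:ℝ)/δ := by ring
      have hpow : ((2*M+1 : ℤ) : ℝ)^(n-1) ≤ (3 * n * δ⁻¹)^(n-1) := by
        apply pow_le_pow_left₀ (by exact_mod_cast hM0) hle3
      calc (3:ℝ) * ((2*M+1 : ℤ) : ℝ)^(n-1) ≤ 3 * (3 * n * δ⁻¹)^(n-1) := by linarith
        _ = C * (δ⁻¹)^(n-1) := by rw [hC, mul_pow]; ring
    -- log bound
    have hδinv1 : (1:ℝ) ≤ δ⁻¹ := one_le_inv_iff₀.2 ⟨hδ0, hδ1.le⟩
    have hR1 : (1:ℝ) ≤ C * (δ⁻¹)^(n-1) := by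
      have := one_le_pow₀ hδinv1 (n := n-1)
      nlinarith
    have hlogR : Real.log (C * (δ⁻¹)^(n-1)) = Real.log C + ((n:ℝ)-1) * Real.log δ⁻¹ := by
      rw [Real.log_mul (by linarith) (by positivity), Real.log_pow]
      congr 2
      have : ((n-1 : ℕ) : ℝ) = (n:ℝ) - 1 := by
        have := Nat.cast_sub hn (R := ℝ)
        simpa using this
      rw [this]
    have hlogN : Real.log (coverNum S δ).toReal ≤ Real.log C + ((n:ℝ)-1) * Real.log δ⁻¹ := by
      rcases le_or_gt (coverNum S δ).toReal 1 with hN1 | hN1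
      · have h0 := Real.log_nonpos ENNReal.toReal_nonneg hN1
        have h1 : 0 ≤ Real.log (C * (δ⁻¹)^(n-1)) := Real.log_nonneg hR1
        rw [hlogR] at h1
        linarith
      · have := Real.log_le_log (by linarith) hNb
        rwa [hlogR] at this
    -- divide
    rw [hf, hg]
    simp only
    rw [div_le_iff₀ hL]
    have hLinv : Real.log δ⁻¹ = -Real.log δ := Real.log_inv δ
    rw [hLinv] at hlogN
    calc Real.log (coverNum S δ).toReal ≤ Real.log C + ((n:ℝ)-1) * (-Real.log δ) := hlogN
      _ = (((n:ℝ) - 1) + Real.log C * (-Real.log δ)⁻¹) * (-Real.log δ) := by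
          have hL0 : Real.log δ ≠ 0 := by
            intro h; rw [h] at hL; simp at hL
          field_simp
          ring
  -- limits
  have h1 : Tendsto (fun δ : ℝ => -Real.log δ) (𝓝[>] (0:ℝ)) atTop := by
    rw [tendsto_neg_atTop_iff]
    exact Real.tendsto_log_nhdsGT_zero
  have h2 : Tendsto (fun δ : ℝ => (-Real.log δ)⁻¹) (𝓝[>] (0:ℝ)) (𝓝 0) :=
    tendsto_inv_atTop_zero.comp h1
  have h3 : Tendsto g (𝓝[>] (0:ℝ)) (𝓝 ((n:ℝ) - 1)) := by
    rw [hg]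
    have := (tendsto_const_nhds (x := ((n:ℝ) - 1)) (f := 𝓝[>] (0:ℝ))).add
      (h2.const_mul (Real.log C))
    simpa using this
  have hfg : ∀ᶠ δ in 𝓝[>] (0:ℝ), f δ ≤ g δ := eventually_of_mem hmem hev
  have hge0 : ∀ᶠ δ in 𝓝[>] (0:ℝ), (0:ℝ) ≤ f δ := by
    apply eventually_of_mem hmem
    intro δ hδm
    have hL : 0 < -Real.log δ := by
      have := Real.log_neg hδm.1 hδm.2
      linarith
    exact div_nonneg (log_coverNum_nonneg S δ) hL.le
  have hcob : IsCoboundedUnder (· ≤ ·) (𝓝[>] (0:ℝ)) f :=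
    isCoboundedUnder_le_of_eventually_le _ hge0
  calc upperBoxDim S = limsup f (𝓝[>] (0:ℝ)) := rfl
    _ ≤ limsup g (𝓝[>] (0:ℝ)) := limsup_le_limsup hfg hcob h3.isBoundedUnder_le
    _ = (n:ℝ) - 1 := h3.limsup_eq
end

section
/- Let S ⊆ [0,1]^2 be a 2-cube antichain. Then the 1-dimensional Hausdorff measure of S satisfies H^1(S) ≤ H^1(π_x(S)) + H^1(π_y(S)), where π_x and π_y are the projections onto the x-axis and y-axis respectively. In particular H^1(S) ≤ 2. -/
/-!
Along an antichain `p 0` increases exactly when `p 1` decreases, so `t = p 0 - p 1` parametrizes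
`S` by a set `T ⊆ ℝ`, and the inverse parametrization is `1`-Lipschitz: `H¹(S) ≤ λ(T)`. The map
`p 0 - p 1 ↦ p 0` extends to a function `φ` with `φ` and `t ↦ t - φ t` both monotone, so Lebesgue
measure splits as the sum of the Stieltjes measures of these two continuous functions, and a
continuous Stieltjes measure gives a set at most the length of its image. The two images of `T`
are the projections of `S` (the second one reflected).
-/

open MeasureTheory Set

namespace StieltjesFunction

variable (s : StieltjesFunction ℝ)

theorem measure_preimage_Ioc_le (hs : Continuous s) (a b : ℝ) :
    s.measure (s ⁻¹' Ioc a b) ≤ ENNReal.ofReal (b - a) := by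
  rw [(measurableSet_Ioc.preimage hs.measurable).measure_eq_iSup_isCompact]
  refine iSup₂_le fun K hKV => iSup_le fun hK => ?_
  rcases K.eq_empty_or_nonempty with rfl | hne
  · simp
  have hmin := hKV (hK.sInf_mem hne)
  have hmax := hKV (hK.sSup_mem hne)
  calc s.measure K ≤ s.measure (Icc (sInf K) (sSup K)) :=
        measure_mono fun x hx => ⟨csInf_le hK.bddBelow hx, le_csSup hK.bddAbove hx⟩
    _ = ENNReal.ofReal (s (sSup K) - s (sInf K)) := by
        rw [measure_Icc, hs.continuousAt.continuousWithinAt.leftLim_eq]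
    _ ≤ ENNReal.ofReal (b - a) := ENNReal.ofReal_le_ofReal (by linarith [hmin.1, hmax.2])

theorem measure_le_volume_image (hs : Continuous s) (A : Set ℝ) :
    s.measure A ≤ volume (s '' A) := by
  have hmap : OuterMeasure.map s s.measure.toOuterMeasure ≤ StieltjesFunction.id.outer := by
    refine OuterMeasure.le_ofFunction.2 fun E => ?_
    rw [length_eq]
    refine le_iInf₂ fun a b => le_iInf fun hE => ?_
    calc s.measure (s ⁻¹' E) ≤ s.measure (s ⁻¹' Ioc a b) :=
          measure_mono (preimage_mono fun x hx => hE ⟨hx, not_isBot x⟩)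
      _ ≤ _ := s.measure_preimage_Ioc_le hs a b
  calc s.measure A ≤ s.measure (s ⁻¹' (s '' A)) := measure_mono (subset_preimage_image _ _)
    _ ≤ StieltjesFunction.id.outer (s '' A) := hmap _
    _ = volume (s '' A) := by rw [Real.volume_eq_stieltjes_id, StieltjesFunction.measure]; rfl

end StieltjesFunction

theorem LipschitzWith.of_monotone_of_monotone_sub {φ : ℝ → ℝ} (hφ : Monotone φ)
    (hψ : Monotone fun t => t - φ t) : LipschitzWith 1 φ := by
  refine LipschitzWith.of_le_add fun x y => ?_
  rw [Real.dist_eq]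
  rcases le_total x y with h | h
  · linarith [hφ h, le_abs_self (x - y), abs_nonneg (x - y)]
  · linarith [hψ h, le_abs_self (x - y)]

theorem LipschitzWith.euclidean_of_monotone_of_monotone_sub {φ : ℝ → ℝ} (hφ : Monotone φ)
    (hψ : Monotone fun t => t - φ t) :
    LipschitzWith 1 fun t => !₂[φ t, φ t - t] := by
  refine LipschitzWith.of_dist_le_mul fun s t => ?_
  have hprod : (φ s - φ t) * ((φ s - φ t) - (s - t)) ≤ 0 := by
    rcases le_total s t with h | h
    · exact mul_nonpos_of_nonpos_of_nonneg (by linarith [hφ h]) (by linarith [hψ h])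
    · exact mul_nonpos_of_nonneg_of_nonpos (by linarith [hφ h]) (by linarith [hψ h])
  rw [EuclideanSpace.dist_eq, Fin.sum_univ_two, NNReal.coe_one, one_mul, Real.dist_eq]
  refine Real.sqrt_le_iff.2 ⟨abs_nonneg _, ?_⟩
  simp only [Matrix.cons_val_zero, Matrix.cons_val_one, Real.dist_eq, sq_abs]
  nlinarith

theorem Real.volume_le_volume_image_add_of_monotone_sub {φ : ℝ → ℝ} (hφ : Monotone φ)
    (hψ : Monotone fun t => t - φ t) (A : Set ℝ) :
    volume A ≤ volume (φ '' A) + volume ((fun t => t - φ t) '' A) := by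
  have hφc : Continuous φ := (LipschitzWith.of_monotone_of_monotone_sub hφ hψ).continuous
  let Φ : StieltjesFunction ℝ := ⟨φ, hφ, fun _ => hφc.continuousWithinAt⟩
  let Ψ : StieltjesFunction ℝ :=
    ⟨fun t => t - φ t, hψ, fun _ => (continuous_id.sub hφc).continuousWithinAt⟩
  have hsum : Φ + Ψ = StieltjesFunction.id := by
    ext t
    exact add_sub_cancel (φ t) t
  calc volume A = Φ.measure A + Ψ.measure A := by
        rw [Real.volume_eq_stieltjes_id, ← hsum, StieltjesFunction.measure_add, Measure.add_apply]
    _ ≤ _ := add_le_add (Φ.measure_le_volume_image hφc A)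
        (Ψ.measure_le_volume_image (continuous_id.sub hφc) A)

section Antichain

variable {S : Set (EuclideanSpace ℝ (Fin 2))}

-- The largest monotone `1`-Lipschitz function with value `p 0` at `p 0 - p 1` for all `p ∈ S`.
noncomputable def antichainProfile (S : Set (EuclideanSpace ℝ (Fin 2))) (x : ℝ) : ℝ :=
  ⨅ q : S, (q.1 0 + max (x - (q.1 0 - q.1 1)) 0)

variable (hS : ∀ x ∈ S, ∀ y ∈ S, x 0 ≤ y 0 → x 1 ≤ y 1 → x = y)
include hS

theorem le_and_le_of_sub_le_sub {p q : EuclideanSpace ℝ (Fin 2)} (hp : p ∈ S) (hq : q ∈ S)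
    (h : p 0 - p 1 ≤ q 0 - q 1) : p 0 ≤ q 0 ∧ q 1 ≤ p 1 := by
  have h0 : p 0 ≤ q 0 := by
    by_contra! hlt
    exact hlt.ne (by rw [hS q hq p hp hlt.le (by linarith)])
  refine ⟨h0, ?_⟩
  by_contra! hlt
  exact hlt.ne (by rw [hS p hp q hq h0 hlt.le])

theorem bddBelow_antichainProfile {p : EuclideanSpace ℝ (Fin 2)} (hp : p ∈ S) (x : ℝ) :
    BddBelow (range fun q : S => q.1 0 + max (x - (q.1 0 - q.1 1)) 0) := by
  refine ⟨min (p 0) (x + p 1), ?_⟩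
  rintro _ ⟨⟨q, hq⟩, rfl⟩
  simp only
  rcases le_total (p 0 - p 1) (q 0 - q 1) with h | h
  · linarith [(le_and_le_of_sub_le_sub hS hp hq h).1, le_max_right (x - (q 0 - q 1)) 0,
      min_le_left (p 0) (x + p 1)]
  · linarith [(le_and_le_of_sub_le_sub hS hq hp h).2, le_max_left (x - (q 0 - q 1)) 0,
      min_le_right (p 0) (x + p 1)]

theorem antichainProfile_sub {p : EuclideanSpace ℝ (Fin 2)} (hp : p ∈ S) :
    antichainProfile S (p 0 - p 1) = p 0 := by
  have : Nonempty S := ⟨⟨p, hp⟩⟩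
  refine le_antisymm ?_ (le_ciInf fun ⟨q, hq⟩ => ?_)
  · simpa [antichainProfile] using ciInf_le (bddBelow_antichainProfile hS hp (p 0 - p 1)) ⟨p, hp⟩
  rcases le_total (p 0 - p 1) (q 0 - q 1) with h | h
  · linarith [(le_and_le_of_sub_le_sub hS hp hq h).1, le_max_right (p 0 - p 1 - (q 0 - q 1)) 0]
  · linarith [(le_and_le_of_sub_le_sub hS hq hp h).2, le_max_left (p 0 - p 1 - (q 0 - q 1)) 0]

theorem monotone_antichainProfile {p : EuclideanSpace ℝ (Fin 2)} (hp : p ∈ S) :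
    Monotone (antichainProfile S) := fun x y hxy =>
  ciInf_mono (bddBelow_antichainProfile hS hp x) fun _ => by gcongr

theorem monotone_sub_antichainProfile {p : EuclideanSpace ℝ (Fin 2)} (hp : p ∈ S) :
    Monotone fun x => x - antichainProfile S x := by
  have : Nonempty S := ⟨⟨p, hp⟩⟩
  intro x y hxy
  suffices antichainProfile S y - (y - x) ≤ antichainProfile S x by simp only; linarith
  refine le_ciInf fun q => ?_
  have hy := ciInf_le (bddBelow_antichainProfile hS hp y) q
  have : max (y - (q.1 0 - q.1 1)) 0 ≤ max (x - (q.1 0 - q.1 1)) 0 + (y - x) :=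
    max_le (by linarith [le_max_left (x - (q.1 0 - q.1 1)) 0])
      (by linarith [le_max_right (x - (q.1 0 - q.1 1)) 0])
  unfold antichainProfile at *
  linarith

end Antichain

theorem hausdorffMeasure_le_of_antichain {S : Set (EuclideanSpace ℝ (Fin 2))}
    (hS : ∀ x ∈ S, ∀ y ∈ S, x 0 ≤ y 0 → x 1 ≤ y 1 → x = y) :
    μH[1] S ≤ μH[1] ((fun x : EuclideanSpace ℝ (Fin 2) => x 0) '' S)
        + μH[1] ((fun x : EuclideanSpace ℝ (Fin 2) => x 1) '' S) := by
  rcases S.eq_empty_or_nonempty with rfl | ⟨p, hp⟩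
  · simp
  set φ := antichainProfile S
  have hφ := monotone_antichainProfile hS hp
  have hψ := monotone_sub_antichainProfile hS hp
  set T := (fun q : EuclideanSpace ℝ (Fin 2) => q 0 - q 1) '' S
  have hST : S ⊆ (fun t => !₂[φ t, φ t - t]) '' T := by
    rintro q hq
    refine ⟨q 0 - q 1, mem_image_of_mem _ hq, ?_⟩
    ext i
    fin_cases i <;> simp [φ, antichainProfile_sub hS hq]
  have hφT : φ '' T = (fun x : EuclideanSpace ℝ (Fin 2) => x 0) '' S := by
    rw [image_image]
    exact image_congr fun q hq => antichainProfile_sub hS hq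
  have hψT : (fun t => t - φ t) '' T = -((fun x : EuclideanSpace ℝ (Fin 2) => x 1) '' S) := by
    rw [image_image, ← image_neg_eq_neg, image_image]
    exact image_congr fun q hq => by simp only [φ, antichainProfile_sub hS hq]; ring
  calc μH[1] S ≤ μH[1] ((fun t => !₂[φ t, φ t - t]) '' T) := measure_mono hST
    _ ≤ μH[1] T := by
      simpa using (LipschitzWith.euclidean_of_monotone_of_monotone_sub hφ hψ
        ).hausdorffMeasure_image_le zero_le_one T
    _ = volume T := by rw [hausdorffMeasure_real]
    _ ≤ volume (φ '' T) + volume ((fun t => t - φ t) '' T) :=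
      Real.volume_le_volume_image_add_of_monotone_sub hφ hψ T
    _ = _ := by rw [hφT, hψT, Measure.measure_neg, hausdorffMeasure_real]

theorem stmt_6 (S : Set (EuclideanSpace ℝ (Fin 2)))
    (hScube : ∀ x ∈ S, ∀ i, x i ∈ Set.Icc (0 : ℝ) 1)
    (hanti : ∀ x ∈ S, ∀ y ∈ S, x 0 ≤ y 0 → x 1 ≤ y 1 → x = y) :
    μH[1] S ≤ μH[1] ((fun x : EuclideanSpace ℝ (Fin 2) => x 0) '' S)
        + μH[1] ((fun x : EuclideanSpace ℝ (Fin 2) => x 1) '' S)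
      ∧ μH[1] S ≤ 2 := by
  have hproj : ∀ i, μH[1] ((fun x : EuclideanSpace ℝ (Fin 2) => x i) '' S) ≤ 1 := fun i =>
    calc μH[1] ((fun x : EuclideanSpace ℝ (Fin 2) => x i) '' S) ≤ volume (Icc (0 : ℝ) 1) := by
          rw [hausdorffMeasure_real]
          exact measure_mono (image_subset_iff.2 fun x hx => hScube x hx i)
      _ = 1 := by simp
  have key := hausdorffMeasure_le_of_antichain hanti
  exact ⟨key, key.trans ((add_le_add (hproj 0) (hproj 1)).trans one_add_one_eq_two.le)⟩
end

section
/- Every 2-cube antichain S ⊆ [0,1]^2 has 1-dimensional Hausdorff measure at most 2. -/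
open MeasureTheory
open scoped ENNReal

theorem stmt_7 (S : Set (EuclideanSpace ℝ (Fin 2)))
    (hScube : ∀ x ∈ S, ∀ i, x i ∈ Set.Icc (0 : ℝ) 1)
    (hanti : ∀ x ∈ S, ∀ y ∈ S, x 0 ≤ y 0 → x 1 ≤ y 1 → x = y) :
    μH[1] S ≤ 2 := by
  set g : EuclideanSpace ℝ (Fin 2) → ℝ := fun p => p 0 - p 1 with hg
  -- key: on S, distances are controlled by g
  have key : ∀ p ∈ S, ∀ q ∈ S, dist p q ≤ |g p - g q| := by
    intro p hp q hq
    have hab : (p 0 - q 0) * (p 1 - q 1) ≤ 0 := by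
      rcases le_or_gt (p 0) (q 0) with h0 | h0
      · rcases le_or_gt (p 1) (q 1) with h1 | h1
        · have := hanti p hp q hq h0 h1; rw [this]; ring_nf; simp
        · exact mul_nonpos_of_nonpos_of_nonneg (by linarith) (by linarith)
      · rcases le_or_gt (q 1) (p 1) with h1 | h1
        · have := hanti q hq p hp (le_of_lt h0) h1; rw [this]; ring_nf; simp
        · exact mul_nonpos_of_nonneg_of_nonpos (by linarith) (by linarith)
    have hdist : dist p q = Real.sqrt ((p 0 - q 0) ^ 2 + (p 1 - q 1) ^ 2) := by
      rw [EuclideanSpace.dist_eq, Fin.sum_univ_two]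
      simp [Real.dist_eq, sq_abs]
    rw [hdist]
    have h1 : (p 0 - q 0) ^ 2 + (p 1 - q 1) ^ 2 ≤ (g p - g q) ^ 2 := by
      simp only [hg]; nlinarith
    calc Real.sqrt ((p 0 - q 0) ^ 2 + (p 1 - q 1) ^ 2)
        ≤ Real.sqrt ((g p - g q) ^ 2) := Real.sqrt_le_sqrt h1
      _ = |g p - g q| := Real.sqrt_sq_eq_abs _
  set f : ℝ → EuclideanSpace ℝ (Fin 2) := Function.invFunOn g S with hf
  have hfmem : ∀ t ∈ g '' S, f t ∈ S ∧ g (f t) = t := by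
    rintro t ⟨p, hp, rfl⟩
    exact ⟨Function.invFunOn_mem ⟨p, hp, rfl⟩, Function.invFunOn_eq ⟨p, hp, rfl⟩⟩
  have himg : f '' (g '' S) = S := by
    apply Set.Subset.antisymm
    · rintro x ⟨t, ht, rfl⟩; exact (hfmem t ht).1
    · intro p hp
      refine ⟨g p, Set.mem_image_of_mem g hp, ?_⟩
      obtain ⟨hmem, heq⟩ := hfmem (g p) (Set.mem_image_of_mem g hp)
      have := key (f (g p)) hmem p hp
      rw [heq] at this
      simp only [sub_self, abs_zero] at this
      exact (dist_le_zero.mp this)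
  have hlip : LipschitzOnWith 1 f (g '' S) := by
    rw [lipschitzOnWith_iff_dist_le_mul]
    intro t ht s hs
    obtain ⟨hmt, het⟩ := hfmem t ht
    obtain ⟨hms, hes⟩ := hfmem s hs
    have := key (f t) hmt (f s) hms
    rw [het, hes] at this
    simpa [Real.dist_eq] using this
  have hsub : g '' S ⊆ Set.Icc (-1 : ℝ) 1 := by
    rintro t ⟨p, hp, rfl⟩
    have h0 := hScube p hp 0
    have h1 := hScube p hp 1
    simp only [Set.mem_Icc, hg] at *
    constructor <;> linarith [h0.1, h0.2, h1.1, h1.2]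
  calc μH[1] S = μH[1] (f '' (g '' S)) := by rw [himg]
    _ ≤ (1 : ℝ≥0∞) ^ (1 : ℝ) * μH[1] (g '' S) := by
        simpa using hlip.hausdorffMeasure_image_le zero_le_one
    _ = μH[1] (g '' S) := by simp
    _ ≤ μH[1] (Set.Icc (-1 : ℝ) 1) := measure_mono hsub
    _ = volume (Set.Icc (-1 : ℝ) 1) := by rw [MeasureTheory.hausdorffMeasure_real]
    _ = 2 := by rw [Real.volume_Icc]; norm_num
end

section
/- Let S ⊆ [0,1]^2 satisfy: for all (x_1,y_1), (x_2,y_2) ∈ S with x_1 ≤ x_2 and y_1 ≤ y_2 we have (x_1,y_1) = (x_2,y_2). Let S_1 = S ∩ {(x,y) : x ≥ y} and define φ_1 : S_1 → ℝ by φ_1(x,y) = x - y. Then φ_1 is injective on S_1 and its inverse is Lipschitz with constant 1, i.e., for all p, q ∈ S_1, |p - q| ≤ |φ_1(p) - φ_1(q)|. -/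
open MeasureTheory

theorem stmt_8 (S : Set (EuclideanSpace ℝ (Fin 2)))
    (hScube : ∀ x ∈ S, ∀ i, x i ∈ Set.Icc (0 : ℝ) 1)
    (hanti : ∀ x ∈ S, ∀ y ∈ S, x 0 ≤ y 0 → x 1 ≤ y 1 → x = y)
    (S₁ : Set (EuclideanSpace ℝ (Fin 2)))
    (hS₁ : S₁ = S ∩ {p | p 1 ≤ p 0})
    (φ : EuclideanSpace ℝ (Fin 2) → ℝ)
    (hφ : ∀ p, φ p = p 0 - p 1) :
    Set.InjOn φ S₁ ∧ ∀ p ∈ S₁, ∀ q ∈ S₁, ‖p - q‖ ≤ |φ p - φ q| := by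
  subst hS₁
  have key : ∀ p ∈ S ∩ {p : EuclideanSpace ℝ (Fin 2) | p 1 ≤ p 0},
      ∀ q ∈ S ∩ {p : EuclideanSpace ℝ (Fin 2) | p 1 ≤ p 0},
      p 0 ≤ q 0 → ‖p - q‖ ≤ |φ p - φ q| := by
    intro p hp q hq hle
    rcases eq_or_ne p q with rfl | hne
    · simp
    have h1 : ¬ (p 1 ≤ q 1) := fun h => hne (hanti p hp.1 q hq.1 hle h)
    push_neg at h1
    have hnorm : ‖p - q‖ = Real.sqrt ((p 0 - q 0)^2 + (p 1 - q 1)^2) := by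
      rw [EuclideanSpace.norm_eq]
      congr 1
      rw [Fin.sum_univ_two]
      simp [sq_abs, sq]
    have habs : |φ p - φ q| = (q 0 - p 0) + (p 1 - q 1) := by
      rw [hφ, hφ, abs_of_nonpos (by linarith)]
      ring
    rw [hnorm, habs]
    have ha : 0 ≤ q 0 - p 0 := by linarith
    have hb : 0 ≤ p 1 - q 1 := by linarith
    have := Real.sqrt_le_sqrt (show (p 0 - q 0)^2 + (p 1 - q 1)^2 ≤ ((q 0 - p 0) + (p 1 - q 1))^2 by nlinarith)
    calc Real.sqrt ((p 0 - q 0)^2 + (p 1 - q 1)^2) ≤ Real.sqrt (((q 0 - p 0) + (p 1 - q 1))^2) := this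
      _ = (q 0 - p 0) + (p 1 - q 1) := Real.sqrt_sq (by linarith)
  have main : ∀ p ∈ S ∩ {p : EuclideanSpace ℝ (Fin 2) | p 1 ≤ p 0},
      ∀ q ∈ S ∩ {p : EuclideanSpace ℝ (Fin 2) | p 1 ≤ p 0},
      ‖p - q‖ ≤ |φ p - φ q| := by
    intro p hp q hq
    rcases le_total (p 0) (q 0) with h | h
    · exact key p hp q hq h
    · rw [(neg_sub q p).symm, norm_neg, abs_sub_comm]
      exact key q hq p hp h
  refine ⟨fun p hp q hq hpq => ?_, main⟩
  have := main p hp q hq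
  rw [hpq, sub_self, abs_zero] at this
  have := norm_eq_zero.mp (le_antisymm this (norm_nonneg _))
  exact sub_eq_zero.mp this
end

section
/- Fix positive integers n ≥ k > t. Let A ⊆ [0,1]^n be such that every element of A has exactly k strictly positive coordinates, and for every x, y ∈ A there exist t distinct indices i_1,...,i_t with x_{i_j} = y_{i_j} > 0 for all j. Then the Hausdorff dimension of A is at most k - t. -/
open MeasureTheory Finset
open scoped ENNReal

/-!
Fix `x₀ ∈ A`. Every `y ∈ A` is nonnegative, so it vanishes off its `k`-element support `S`, and it
agrees with `x₀` on some `t`-element `s ⊆ S`. Hence `y` lies in the affine slice where all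
coordinates outside `S \ s` are frozen to those of `x₀ · 𝟙_s`, a set of dimension `k - t`.
Only finitely many pairs `(s, S)` occur, so `A` is covered by finitely many such slices.
-/

variable {ι : Type*} [Fintype ι]

def coordSlice (u : Finset ι) (c : ι → ℝ) : Set (EuclideanSpace ℝ ι) :=
  {y | ∀ i ∉ u, y i = c i}

theorem dimH_coordSlice_le (u : Finset ι) (c : ι → ℝ) : dimH (coordSlice u c) ≤ #u := by
  classical
  let g : (u → ℝ) → EuclideanSpace ℝ ι :=
    fun z => WithLp.toLp 2 fun i => if h : i ∈ u then z ⟨i, h⟩ else c i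
  have hg : ContDiff ℝ 1 g := by
    refine PiLp.contDiff_toLp.comp (contDiff_pi.2 fun i => ?_)
    by_cases h : i ∈ u
    · simpa [h] using contDiff_apply ℝ ℝ (⟨i, h⟩ : u)
    · simpa [h] using contDiff_const
  have hsub : coordSlice u c ⊆ Set.range g := fun y hy => by
    refine ⟨fun j => y j, ?_⟩
    ext i
    by_cases h : i ∈ u
    · simp [g, h]
    · simp [g, h, hy i h]
  calc dimH (coordSlice u c) ≤ dimH (Set.range g) := dimH_mono hsub
    _ ≤ Module.finrank ℝ (u → ℝ) := hg.dimH_range_le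
    _ = #u := by simp

theorem subset_biUnion_coordSlice [DecidableEq ι] {k t : ℕ} {A : Set (EuclideanSpace ℝ ι)}
    (x₀ : EuclideanSpace ℝ ι) (hA : ∀ y ∈ A, ∀ i, 0 ≤ y i)
    (hsupp : ∀ y ∈ A, {i | 0 < y i}.ncard = k)
    (hx₀ : ∀ y ∈ A, ∃ s : Finset ι, #s = t ∧ ∀ i ∈ s, x₀ i = y i ∧ 0 < x₀ i) :
    A ⊆ ⋃ p ∈ {p : Finset ι × Finset ι | p.1 ⊆ p.2 ∧ #p.1 = t ∧ #p.2 = k},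
      coordSlice (p.2 \ p.1) fun i => if i ∈ p.1 then x₀ i else 0 := by
  intro y hy
  obtain ⟨s, hst, hs⟩ := hx₀ y hy
  let S : Finset ι := {i | 0 < y i}
  have hS : #S = k := by
    rw [← hsupp y hy, ← Set.ncard_coe_finset]
    simp [S]
  have hsS : s ⊆ S := fun i hi => by
    simpa [S, ← (hs i hi).1] using (hs i hi).2
  refine Set.mem_biUnion (x := (s, S)) ⟨hsS, hst, hS⟩ fun i hi => ?_
  by_cases his : i ∈ s
  · simp [his, (hs i his).1]
  · have hiS : ¬ 0 < y i := by simpa [S, his] using hi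
    simpa [his] using le_antisymm (not_lt.1 hiS) (hA y hy i)

theorem stmt_17_general (n k t : ℕ)
    (A : Set (EuclideanSpace ℝ (Fin n)))
    (hAcube : ∀ x ∈ A, ∀ i, x i ∈ Set.Icc (0 : ℝ) 1)
    (hsupp : ∀ x ∈ A, {i : Fin n | 0 < x i}.ncard = k)
    (hint : ∀ x ∈ A, ∀ y ∈ A, ∃ s : Finset (Fin n), s.card = t ∧
      ∀ i ∈ s, x i = y i ∧ 0 < x i) :
    dimH A ≤ (k : ℝ≥0∞) - t := by
  rcases A.eq_empty_or_nonempty with rfl | ⟨x₀, hx₀⟩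
  · simp
  have hcover :=
    subset_biUnion_coordSlice x₀ (fun y hy i => (hAcube y hy i).1) hsupp (hint x₀ hx₀)
  calc dimH A ≤ dimH _ := dimH_mono hcover
    _ = _ := dimH_bUnion (Set.to_countable _) _
    _ ≤ k - t := iSup₂_le fun p ⟨hsub, hs, hS⟩ => by
      grw [dimH_coordSlice_le, card_sdiff_of_subset hsub, hs, hS, ENNReal.natCast_sub]

theorem stmt_17 (n k t : ℕ) (ht : 1 ≤ t) (hkt : t < k) (hkn : k ≤ n)
    (A : Set (EuclideanSpace ℝ (Fin n)))
    (hAcube : ∀ x ∈ A, ∀ i, x i ∈ Set.Icc (0 : ℝ) 1)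
    (hsupp : ∀ x ∈ A, {i : Fin n | 0 < x i}.ncard = k)
    (hint : ∀ x ∈ A, ∀ y ∈ A, ∃ s : Finset (Fin n), s.card = t ∧
      ∀ i ∈ s, x i = y i ∧ 0 < x i) :
    dimH A ≤ (k : ℝ≥0∞) - t :=
  stmt_17_general n k t A hAcube hsupp hint
end
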